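/- Let m_*, m_0 ∈ ℝ^n and let C_*, C_0 be symmetric positive-definite real n×n matrices. For t ≥ 0 define C_t as the inverse of the matrix C_*⁻¹ + e^{−t}·(C_0⁻¹ − C_*⁻¹) (which is symmetric positive definite, being a convex combination of C_*⁻¹ and C_0⁻¹ since e^{−t} ∈ (0,1]), and define m_t = m_* + e^{−t}·C_t·C_0⁻¹·(m_0 − m_*). Then t ↦ m_t and t ↦ C_t are differentiable on [0,∞), agree with (m_0, C_0) at t = 0, and satisfy dm_t/dt = C_t·C_*⁻¹·(m_* − m_t) and dC_t/dt = C_t − C_t·C_*⁻¹·C_t for all t ≥ 0. -/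

import Mathlib

open Matrix

attribute [local instance] Matrix.linftyOpNormedRing Matrix.linftyOpNormedAlgebra

private lemma posDef_smul' {n : ℕ} {M : Matrix (Fin n) (Fin n) ℝ} (hM : M.PosDef)
    {a : ℝ} (ha : 0 < a) : (a • M).PosDef := by
  refine ⟨?_, fun x hx => ?_⟩
  · unfold Matrix.IsHermitian
    rw [conjTranspose_smul, hM.1.eq]
    simp
  · exact (hM.smul ha).2 hx

private lemma posSemidef_smul' {n : ℕ} {M : Matrix (Fin n) (Fin n) ℝ} (hM : M.PosDef)
    {a : ℝ} (ha : 0 ≤ a) : (a • M).PosSemidef := by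
  refine ⟨?_, fun x => ?_⟩
  · unfold Matrix.IsHermitian
    rw [conjTranspose_smul, hM.1.eq]
    simp
  · exact (hM.posSemidef.smul ha).2 x

/-- Derivative of the inverse of a differentiable matrix curve. -/
private lemma hasDerivAt_matrix_inv {n : ℕ} (B : ℝ → Matrix (Fin n) (Fin n) ℝ)
    (B' : Matrix (Fin n) (Fin n) ℝ) (t : ℝ) (hB : HasDerivAt B B' t)
    (hU : IsUnit (B t)) :
    HasDerivAt (fun s => (B s)⁻¹) (-((B t)⁻¹ * B' * (B t)⁻¹)) t := by
  have h1 : HasDerivAt (fun s => Ring.inverse (B s))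
      (-(ContinuousLinearMap.mulLeftRight ℝ (Matrix (Fin n) (Fin n) ℝ) ↑hU.unit⁻¹ ↑hU.unit⁻¹) B') t := by
    have hf := hasFDerivAt_ringInverse (𝕜 := ℝ) hU.unit
    rw [hU.unit_spec] at hf
    exact hf.comp_hasDerivAt t hB
  have h2 : (fun s => Ring.inverse (B s)) = fun s => (B s)⁻¹ := by
    funext s; rw [Matrix.nonsing_inv_eq_ringInverse]
  have h3 : (↑hU.unit⁻¹ : Matrix (Fin n) (Fin n) ℝ) = (B t)⁻¹ := by
    rw [Matrix.coe_units_inv, hU.unit_spec]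
  rw [h2, h3] at h1
  simpa [ContinuousLinearMap.mulLeftRight_apply] using h1

/-- Explicit solution of the Gaussian approximate Fisher–Rao gradient flow for a
Gaussian target `N(m⋆, C⋆)`: with `C_t = (C⋆⁻¹ + e^{−t}(C₀⁻¹ − C⋆⁻¹))⁻¹` and
`m_t = m⋆ + e^{−t} C_t C₀⁻¹ (m₀ − m⋆)`, the curves start at `(m₀, C₀)`, the
matrices being inverted are positive definite, and
`dm_t/dt = C_t C⋆⁻¹ (m⋆ − m_t)`, `dC_t/dt = C_t − C_t C⋆⁻¹ C_t` for `t ≥ 0`. -/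
theorem gaussian_fisherRao_flow_explicit_solution
    (n : ℕ) (mstar m0 : Fin n → ℝ)
    (Cstar C0 : Matrix (Fin n) (Fin n) ℝ)
    (hCstar : Cstar.PosDef) (hC0 : C0.PosDef)
    (Ct : ℝ → Matrix (Fin n) (Fin n) ℝ)
    (hCt : ∀ t, Ct t = (Cstar⁻¹ + Real.exp (-t) • (C0⁻¹ - Cstar⁻¹))⁻¹)
    (mt : ℝ → Fin n → ℝ)
    (hmt : ∀ t, mt t = mstar + Real.exp (-t) • (Ct t).mulVec (C0⁻¹.mulVec (m0 - mstar))) :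
    mt 0 = m0 ∧ Ct 0 = C0 ∧
    (∀ t : ℝ, 0 ≤ t →
      (Cstar⁻¹ + Real.exp (-t) • (C0⁻¹ - Cstar⁻¹)).PosDef ∧
      (∀ i, HasDerivAt (fun s => mt s i) (((Ct t * Cstar⁻¹).mulVec (mstar - mt t)) i) t) ∧
      (∀ i j, HasDerivAt (fun s => Ct s i j)
        ((Ct t - Ct t * Cstar⁻¹ * Ct t) i j) t)) := by
  have hCsi : (Cstar⁻¹).PosDef := hCstar.inv
  have hC0i : (C0⁻¹).PosDef := hC0.inv
  set D : Matrix (Fin n) (Fin n) ℝ := C0⁻¹ - Cstar⁻¹ with hDdef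
  set B : ℝ → Matrix (Fin n) (Fin n) ℝ := fun t => Cstar⁻¹ + Real.exp (-t) • D with hBdef
  -- Positive definiteness of B t for t ≥ 0
  have hBpos : ∀ t : ℝ, 0 ≤ t → (B t).PosDef := by
    intro t ht
    have he1 : Real.exp (-t) ≤ 1 := Real.exp_le_one_iff.mpr (by linarith)
    have he0 : 0 < Real.exp (-t) := Real.exp_pos _
    have hrw : B t = (1 - Real.exp (-t)) • Cstar⁻¹ + Real.exp (-t) • C0⁻¹ := by
      simp only [hBdef, hDdef, smul_sub, sub_smul, one_smul]
      abel
    rw [hrw]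
    exact Matrix.PosDef.posSemidef_add (posSemidef_smul' hCsi (by linarith)) (posDef_smul' hC0i he0)
  -- initial conditions
  have hC0det : IsUnit C0.det := hC0.det_pos.ne'.isUnit
  have hCt0 : Ct 0 = C0 := by
    rw [hCt 0]
    simp only [neg_zero, Real.exp_zero, one_smul, hDdef]
    rw [add_sub_cancel]
    exact Matrix.nonsing_inv_nonsing_inv C0 hC0det
  have hmt0 : mt 0 = m0 := by
    rw [hmt 0, hCt0]
    simp only [neg_zero, Real.exp_zero, one_smul, mulVec_mulVec]
    rw [Matrix.mul_nonsing_inv C0 hC0det, one_mulVec]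
    simp
  refine ⟨hmt0, hCt0, fun t ht => ?_⟩
  have hBt : (B t).PosDef := hBpos t ht
  refine ⟨hBt, ?_⟩
  -- key facts about Ct t
  have hCtB : ∀ s, Ct s = (B s)⁻¹ := fun s => hCt s
  have hBunit : IsUnit (B t) := hBt.isUnit
  have hBdet : IsUnit (B t).det := hBt.det_pos.ne'.isUnit
  have hCtBmul : Ct t * B t = 1 := by rw [hCtB]; exact Matrix.nonsing_inv_mul _ hBdet
  -- derivative of B
  have hBderiv : HasDerivAt B (-Real.exp (-t) • D) t := by
    have h1 : HasDerivAt (fun s : ℝ => Real.exp (-s)) (-Real.exp (-t)) t := by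
      simpa using (hasDerivAt_neg t).exp
    exact (h1.smul_const D).const_add Cstar⁻¹
  -- derivative of Ct (matrix-valued)
  have hCtderiv : HasDerivAt Ct (Ct t - Ct t * Cstar⁻¹ * Ct t) t := by
    have h1 := hasDerivAt_matrix_inv B (-Real.exp (-t) • D) t hBderiv hBunit
    have h2 : (fun s => (B s)⁻¹) = Ct := by funext s; rw [hCtB]
    have h3 : -((B t)⁻¹ * (-Real.exp (-t) • D) * (B t)⁻¹)
        = Ct t - Ct t * Cstar⁻¹ * Ct t := by
      rw [← hCtB]
      have hED : Real.exp (-t) • D = B t - Cstar⁻¹ := by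
        simp only [hBdef]; abel
      have : -(Ct t * (-Real.exp (-t) • D) * Ct t)
          = Ct t * (B t - Cstar⁻¹) * Ct t := by
        rw [neg_smul, Matrix.mul_neg, Matrix.neg_mul, neg_neg, hED]
      rw [this, Matrix.mul_sub, Matrix.sub_mul, hCtBmul, Matrix.one_mul]
    rw [h2, h3] at h1
    exact h1
  -- entrywise derivative of Ct
  have hCtentry : ∀ i j, HasDerivAt (fun s => Ct s i j)
      ((Ct t - Ct t * Cstar⁻¹ * Ct t) i j) t := by
    intro i j
    have L := LinearMap.toContinuousLinearMap
      (Matrix.entryLinearMap ℝ ℝ i j : Matrix (Fin n) (Fin n) ℝ →ₗ[ℝ] ℝ)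
    exact (LinearMap.toContinuousLinearMap
      (Matrix.entryLinearMap ℝ ℝ i j)).hasFDerivAt.comp_hasDerivAt t hCtderiv
  refine ⟨?_, hCtentry⟩
  -- derivative of mt
  intro i
  set v : Fin n → ℝ := C0⁻¹.mulVec (m0 - mstar) with hv
  have hmt' : ∀ s, mt s i = mstar i + Real.exp (-s) * ((Ct s).mulVec v) i := by
    intro s; rw [hmt s]; simp [hv]
  have hg : HasDerivAt (fun s => ((Ct s).mulVec v) i)
      (((Ct t - Ct t * Cstar⁻¹ * Ct t).mulVec v) i) t := by
    simp only [Matrix.mulVec, dotProduct]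
    exact HasDerivAt.fun_sum fun j _ => (hCtentry i j).mul_const (v j)
  have he : HasDerivAt (fun s : ℝ => Real.exp (-s)) (-Real.exp (-t)) t := by
    simpa using (hasDerivAt_neg t).exp
  have hprod := (he.fun_mul hg).const_add (mstar i)
  have heq : (fun s => mstar i + Real.exp (-s) * ((Ct s).mulVec v) i)
      = fun s => mt s i := by funext s; rw [hmt' s]
  rw [heq] at hprod
  refine hprod.congr_deriv ?_
  -- algebraic identity for the derivative value
  have hms : mstar - mt t = -(Real.exp (-t) • (Ct t).mulVec v) := by
    rw [hmt t]; simp [hv]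
  rw [hms]
  have expand : ((Ct t * Cstar⁻¹).mulVec (-(Real.exp (-t) • (Ct t).mulVec v))) i
      = -(Real.exp (-t) * ((Ct t * Cstar⁻¹ * Ct t).mulVec v) i) := by
    rw [Matrix.mulVec_neg, Matrix.mulVec_smul]
    simp [Matrix.mulVec_mulVec]
  rw [expand]
  rw [Matrix.sub_mulVec]
  simp only [Pi.sub_apply]
  ring
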